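/- Let (w_t)_{t≥1} be i.i.d. real random variables with E[w₁] = 1 and E[(w₁ − 1)²] = 1, and let k ≥ 1. Let (d_{t,n})_{1 ≤ t ≤ n} be a deterministic triangular array of vectors in ℝ^k and d⋆ ∈ ℝ^k such that (1/n)·Σ_{t=1}^n d_{t,n} → d⋆ as n → ∞ and limsup_{n→∞} (1/n)·Σ_{t=1}^n ‖d_{t,n}‖² < ∞. Then (1/n)·Σ_{t=1}^n w_t·d_{t,n} converges to d⋆ in probability, i.e., for every ε > 0, P(‖(1/n)·Σ_{t=1}^n w_t·d_{t,n} − d⋆‖ > ε) → 0 as n → ∞. -/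

import Mathlib

open MeasureTheory ProbabilityTheory Filter

/-- Random-weighting law of large numbers (Lemma S8, part 1): for i.i.d. weights `w_t`
with mean `1` and variance `1`, and a deterministic triangular array `d_{t,n}` in `ℝ^k`
with `(1/n) Σ_{t=1}^n d_{t,n} → d⋆` and `limsup (1/n) Σ_{t=1}^n ‖d_{t,n}‖² < ∞`,
`(1/n) Σ_{t=1}^n w_t d_{t,n} → d⋆` in probability. -/
theorem stmt_11
    {Ω : Type*} [MeasurableSpace Ω] (P : Measure Ω) [IsProbabilityMeasure P]
    (w : ℕ → Ω → ℝ) (hmeas : ∀ t, Measurable (w t))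
    (hindep : iIndepFun w P)
    (hident : ∀ s t, IdentDistrib (w s) (w t) P P)
    (hint : Integrable (w 1) P) (hmean : ∫ ω, w 1 ω ∂P = 1)
    (hL2 : MemLp (fun ω => w 1 ω - 1) 2 P)
    (hvar : ∫ ω, (w 1 ω - 1) ^ 2 ∂P = 1)
    (k : ℕ) (hk : 1 ≤ k)
    (d : ℕ → ℕ → EuclideanSpace ℝ (Fin k)) (dstar : EuclideanSpace ℝ (Fin k))
    (hd : Tendsto (fun n : ℕ => (n : ℝ)⁻¹ • ∑ t ∈ Finset.Icc 1 n, d t n) atTop (nhds dstar))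
    (hbdd : IsBoundedUnder (· ≤ ·) atTop
      (fun n : ℕ => (n : ℝ)⁻¹ * ∑ t ∈ Finset.Icc 1 n, ‖d t n‖ ^ 2)) :
    ∀ ε > (0 : ℝ),
      Tendsto (fun n : ℕ =>
          P {ω | ε < ‖(n : ℝ)⁻¹ • (∑ t ∈ Finset.Icc 1 n, w t ω • d t n) - dstar‖})
        atTop (nhds 0) := by
  classical
  have hident1 : ∀ t, IdentDistrib (w t) (w 1) P P := fun t => hident t 1
  have hL2w : MemLp (w 1) 2 P := by
    have h1 : w 1 = fun ω => (w 1 ω - 1) + 1 := by funext ω; ring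
    rw [h1]; exact hL2.add (memLp_const 1)
  have hL2t : ∀ t, MemLp (w t) 2 P := fun t => (hident1 t).symm.memLp_snd hL2w
  have hintt : ∀ t, Integrable (w t) P := fun t => (hL2t t).integrable one_le_two
  have hmeant : ∀ t, ∫ ω, w t ω ∂P = 1 := fun t => by
    rw [(hident1 t).integral_eq]; exact hmean
  have hvar1 : variance (w 1) P = 1 := by
    rw [variance_eq_integral hL2w.aemeasurable, hmean]
    simpa using hvar
  have hvart : ∀ t, variance (w t) P = 1 := fun t => by
    rw [(hident1 t).variance_eq]; exact hvar1
  -- the key L² computation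
  have key : ∀ n : ℕ,
      (∫ ω, ‖(∑ t ∈ Finset.Icc 1 n, (w t ω - 1) • d t n : EuclideanSpace ℝ (Fin k))‖^2 ∂P
        = ∑ t ∈ Finset.Icc 1 n, ‖d t n‖^2)
      ∧ Integrable (fun ω =>
          ‖(∑ t ∈ Finset.Icc 1 n, (w t ω - 1) • d t n : EuclideanSpace ℝ (Fin k))‖^2) P := by
    intro n
    set s := Finset.Icc 1 n with hs
    set T : Ω → EuclideanSpace ℝ (Fin k) := fun ω => ∑ t ∈ s, (w t ω - 1) • d t n with hT
    have hXL2 : ∀ (i : Fin k) t, MemLp (fun ω => d t n i * w t ω) 2 P :=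
      fun i t => (hL2t t).const_mul _
    have hSL2 : ∀ i : Fin k, MemLp (fun ω => ∑ t ∈ s, d t n i * w t ω) 2 P := by
      intro i
      have h := memLp_finset_sum' (μ := P) (p := 2) s (fun t (_ : t ∈ s) => hXL2 i t)
      have heq : (∑ t ∈ s, fun ω => d t n i * w t ω)
          = fun ω => ∑ t ∈ s, d t n i * w t ω := by
        funext ω; simp
      rwa [heq] at h
    have hmeanS : ∀ i : Fin k, ∫ ω, (∑ t ∈ s, d t n i * w t ω) ∂P = ∑ t ∈ s, d t n i := by
      intro i
      rw [integral_finset_sum _ (fun t _ => (hintt t).const_mul _)]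
      refine Finset.sum_congr rfl fun t _ => ?_
      rw [integral_const_mul, hmeant t, mul_one]
    have hvarsum : ∀ i : Fin k,
        variance (fun ω => ∑ t ∈ s, d t n i * w t ω) P = ∑ t ∈ s, (d t n i)^2 := by
      intro i
      have hpi : (fun ω => ∑ t ∈ s, d t n i * w t ω)
          = ∑ t ∈ s, (fun ω => d t n i * w t ω) := by
        funext ω; simp
      rw [hpi, IndepFun.variance_sum (fun t _ => hXL2 i t) ?_]
      · exact Finset.sum_congr rfl fun t _ => by rw [variance_const_mul, hvart t, mul_one]
      · intro a _ b _ hab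
        exact (hindep.indepFun hab).comp (measurable_const_mul _) (measurable_const_mul _)
    have hTi : ∀ ω (i : Fin k), T ω i = (∑ t ∈ s, d t n i * w t ω) - ∑ t ∈ s, d t n i := by
      intro ω i
      have h0 : T ω i = ∑ t ∈ s, ((w t ω - 1) • d t n) i :=
        (congrFun (WithLp.ofLp_sum (s := s) (f := fun t => (w t ω - 1) • d t n)) i).trans (Finset.sum_apply i s _)
      rw [h0, ← Finset.sum_sub_distrib]
      refine Finset.sum_congr rfl fun t _ => ?_
      show (w t ω - 1) * d t n i = _
      ring
    have hTiL2 : ∀ i : Fin k, MemLp (fun ω => T ω i) 2 P := by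
      intro i
      have hfun : (fun ω => T ω i)
          = (fun ω => ∑ t ∈ s, d t n i * w t ω) - (fun _ => ∑ t ∈ s, d t n i) :=
        funext fun ω => hTi ω i
      rw [hfun]
      exact (hSL2 i).sub (memLp_const _)
    have hint_i : ∀ i : Fin k, Integrable (fun ω => (T ω i)^2) P :=
      fun i => (hTiL2 i).integrable_sq
    have hnorm_pt : ∀ ω, ‖T ω‖^2 = ∑ i : Fin k, (T ω i)^2 := by
      intro ω
      rw [EuclideanSpace.norm_eq, Real.sq_sqrt (Finset.sum_nonneg fun i _ => sq_nonneg _)]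
      exact Finset.sum_congr rfl fun i _ => by rw [Real.norm_eq_abs, sq_abs]
    have hvarTi : ∀ i : Fin k, ∫ ω, (T ω i)^2 ∂P = ∑ t ∈ s, (d t n i)^2 := by
      intro i
      rw [← hvarsum i, variance_eq_integral (hSL2 i).aemeasurable, hmeanS i]
      refine integral_congr_ae (Filter.Eventually.of_forall fun ω => ?_)
      beta_reduce
      rw [hTi ω i]
    constructor
    · calc ∫ ω, ‖T ω‖^2 ∂P = ∫ ω, ∑ i : Fin k, (T ω i)^2 ∂P :=
            integral_congr_ae (Filter.Eventually.of_forall fun ω => hnorm_pt ω)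
        _ = ∑ i : Fin k, ∫ ω, (T ω i)^2 ∂P := integral_finset_sum _ fun i _ => hint_i i
        _ = ∑ i : Fin k, ∑ t ∈ s, (d t n i)^2 :=
            Finset.sum_congr rfl fun i _ => hvarTi i
        _ = ∑ t ∈ s, ∑ i : Fin k, (d t n i)^2 := Finset.sum_comm
        _ = ∑ t ∈ s, ‖d t n‖^2 := by
            refine Finset.sum_congr rfl fun t _ => ?_
            rw [EuclideanSpace.norm_eq,
              Real.sq_sqrt (Finset.sum_nonneg fun i _ => sq_nonneg _)]
            exact (Finset.sum_congr rfl fun i _ => by rw [Real.norm_eq_abs, sq_abs]).symm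
    · have : Integrable (fun ω => ∑ i : Fin k, (T ω i)^2) P :=
        integrable_finset_sum _ fun i _ => hint_i i
      exact this.congr (Filter.Eventually.of_forall fun ω => (hnorm_pt ω).symm)
  -- the deterministic part is eventually small
  intro ε hε
  obtain ⟨C, hC⟩ := hbdd
  have hC' : ∀ᶠ n : ℕ in atTop, (n : ℝ)⁻¹ * ∑ t ∈ Finset.Icc 1 n, ‖d t n‖ ^ 2 ≤ C := by
    simpa [Filter.eventually_map] using hC
  have ha : Tendsto
      (fun n : ℕ => ‖(n : ℝ)⁻¹ • ∑ t ∈ Finset.Icc 1 n, d t n - dstar‖) atTop (nhds 0) := by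
    have := (hd.sub (tendsto_const_nhds (x := dstar))).norm
    simpa using this
  have hsmall : ∀ᶠ n : ℕ in atTop,
      ‖(n : ℝ)⁻¹ • ∑ t ∈ Finset.Icc 1 n, d t n - dstar‖ < ε / 2 :=
    ha.eventually (gt_mem_nhds (half_pos hε))
  -- main bound
  have hbound : ∀ᶠ n : ℕ in atTop,
      (P {ω | ε < ‖(n : ℝ)⁻¹ • (∑ t ∈ Finset.Icc 1 n, w t ω • d t n) - dstar‖}).toReal
        ≤ (n : ℝ)⁻¹ * C / (ε / 2) ^ 2 := by
    filter_upwards [hC', hsmall, eventually_ge_atTop 1] with n hCn hsn hn1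
    set s := Finset.Icc 1 n with hs
    set T : Ω → EuclideanSpace ℝ (Fin k) := fun ω => ∑ t ∈ s, (w t ω - 1) • d t n with hT
    have hnpos : (0 : ℝ) < (n : ℝ) := by exact_mod_cast hn1
    have hninv : (0 : ℝ) ≤ (n : ℝ)⁻¹ := inv_nonneg.2 hnpos.le
    have hsubset :
        {ω | ε < ‖(n : ℝ)⁻¹ • (∑ t ∈ s, w t ω • d t n) - dstar‖}
          ⊆ {ω | (ε / 2) ^ 2 ≤ ‖(n : ℝ)⁻¹ • T ω‖ ^ 2} := by
      intro ω hω
      simp only [Set.mem_setOf_eq] at hω ⊢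
      have hdecomp : (n : ℝ)⁻¹ • (∑ t ∈ s, w t ω • d t n) - dstar
          = (n : ℝ)⁻¹ • T ω + ((n : ℝ)⁻¹ • ∑ t ∈ s, d t n - dstar) := by
        have h1 : ∀ t ∈ s, w t ω • d t n = (w t ω - 1) • d t n + d t n := fun t _ => by
          rw [sub_smul, one_smul]; abel
        rw [Finset.sum_congr rfl h1, Finset.sum_add_distrib, smul_add, hT]
        abel
      rw [hdecomp] at hω
      have h2 : ε < ‖(n : ℝ)⁻¹ • T ω‖ + ε / 2 :=
        lt_of_lt_of_le hω (le_trans (norm_add_le _ _) (by linarith [hsn]))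
      nlinarith [norm_nonneg ((n : ℝ)⁻¹ • T ω)]
    have hpt : ∀ ω, ‖(n : ℝ)⁻¹ • T ω‖ ^ 2 = ((n : ℝ)⁻¹) ^ 2 * ‖T ω‖ ^ 2 := by
      intro ω
      rw [norm_smul, mul_pow, Real.norm_eq_abs, sq_abs]
    have hfint : Integrable (fun ω => ‖(n : ℝ)⁻¹ • T ω‖ ^ 2) P := by
      have h := ((key n).2).const_mul (((n : ℝ)⁻¹) ^ 2)
      exact h.congr (Filter.Eventually.of_forall fun ω => (hpt ω).symm)
    have hfval : ∫ ω, ‖(n : ℝ)⁻¹ • T ω‖ ^ 2 ∂P ≤ (n : ℝ)⁻¹ * C := by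
      have h1 : ∫ ω, ‖(n : ℝ)⁻¹ • T ω‖ ^ 2 ∂P
          = ((n : ℝ)⁻¹) ^ 2 * ∑ t ∈ s, ‖d t n‖ ^ 2 := by
        rw [hs, ← (key n).1, ← integral_const_mul]
        exact integral_congr_ae (Filter.Eventually.of_forall fun ω => hpt ω)
      rw [h1]
      calc ((n : ℝ)⁻¹) ^ 2 * ∑ t ∈ s, ‖d t n‖ ^ 2
          = (n : ℝ)⁻¹ * ((n : ℝ)⁻¹ * ∑ t ∈ s, ‖d t n‖ ^ 2) := by ring
        _ ≤ (n : ℝ)⁻¹ * C := mul_le_mul_of_nonneg_left hCn hninv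
    have hm := mul_meas_ge_le_integral_of_nonneg
      (μ := P) (f := fun ω => ‖(n : ℝ)⁻¹ • T ω‖ ^ 2)
      (Filter.Eventually.of_forall fun ω => sq_nonneg _) hfint ((ε / 2) ^ 2)
    have hPE : (P {ω | ε < ‖(n : ℝ)⁻¹ • (∑ t ∈ s, w t ω • d t n) - dstar‖}).toReal
        ≤ (P {ω | (ε / 2) ^ 2 ≤ ‖(n : ℝ)⁻¹ • T ω‖ ^ 2}).toReal :=
      ENNReal.toReal_mono (measure_ne_top _ _) (measure_mono hsubset)
    have hε2 : (0 : ℝ) < (ε / 2) ^ 2 := by positivity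
    calc (P {ω | ε < ‖(n : ℝ)⁻¹ • (∑ t ∈ s, w t ω • d t n) - dstar‖}).toReal
        ≤ (P {ω | (ε / 2) ^ 2 ≤ ‖(n : ℝ)⁻¹ • T ω‖ ^ 2}).toReal := hPE
      _ ≤ (∫ ω, ‖(n : ℝ)⁻¹ • T ω‖ ^ 2 ∂P) / (ε / 2) ^ 2 := by
          rw [le_div_iff₀ hε2, mul_comm]; exact hm
      _ ≤ (n : ℝ)⁻¹ * C / (ε / 2) ^ 2 := by gcongr
  -- conclude
  have hb : Tendsto (fun n : ℕ => (n : ℝ)⁻¹ * C / (ε / 2) ^ 2) atTop (nhds 0) := by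
    have h1 : Tendsto (fun n : ℕ => (n : ℝ)⁻¹) atTop (nhds 0) :=
      tendsto_inv_atTop_nhds_zero_nat
    have := (h1.mul_const C).div_const ((ε / 2) ^ 2)
    simpa using this
  have htoReal : Tendsto (fun n : ℕ =>
      (P {ω | ε < ‖(n : ℝ)⁻¹ • (∑ t ∈ Finset.Icc 1 n, w t ω • d t n) - dstar‖}).toReal)
      atTop (nhds 0) :=
    tendsto_of_tendsto_of_tendsto_of_le_of_le' tendsto_const_nhds hb
      (Filter.Eventually.of_forall fun n => ENNReal.toReal_nonneg) hbound
  have := (ENNReal.tendsto_toReal_iff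
    (fun n => measure_ne_top P _) (x := 0) (by simp)).1 (by simpa using htoReal)
  exact this
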